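/- arXiv:1311.5102 — 2 statements merged into one kernel-verified Lean document; each statement's English description precedes it below -/
import Mathlib

section
/- Let v_1,...,v_n be unit vectors in ℝ^d such that for every unit vector u ∈ ℝ^d, Σ_{j=1}^n ⟨v_j, u⟩² ≤ t. Let P ⊆ ℝ^d be a two-dimensional linear subspace and α > 0. Then the number of indices j such that |⟨v_j, u⟩| ≥ α for some unit vector u ∈ P is at most (80/α³)·t. -/
/-- if unit vectors v_j satisfy Σ_j ⟨v_j,u⟩² ≤ t for every unit
vector u, and P is a two-dimensional subspace, then at most (80/α³)·t of the
v_j have correlation at least α with some unit vector of P. -/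
theorem stmt_5 {d n : ℕ} (v : Fin n → EuclideanSpace ℝ (Fin d)) (t : ℝ)
    (hunit : ∀ j, ‖v j‖ = 1)
    (hspread : ∀ u : EuclideanSpace ℝ (Fin d), ‖u‖ = 1 →
      ∑ j : Fin n, (inner ℝ (v j) u : ℝ) ^ 2 ≤ t)
    (P : Submodule ℝ (EuclideanSpace ℝ (Fin d)))
    (hP : Module.finrank ℝ P = 2) (α : ℝ) (hα : 0 < α) :
    ({j : Fin n | ∃ u ∈ P, ‖u‖ = 1 ∧ α ≤ |(inner ℝ (v j) u : ℝ)|}.ncard : ℝ)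
      ≤ (80 / α ^ 3) * t := by
  classical
  -- orthonormal basis of P indexed by Fin 2
  let b : OrthonormalBasis (Fin 2) ℝ P :=
    (stdOrthonormalBasis ℝ P).reindex (finCongr hP)
  let e : Fin 2 → EuclideanSpace ℝ (Fin d) := fun i => (b i : EuclideanSpace ℝ (Fin d))
  have he_unit : ∀ i, ‖e i‖ = 1 := by
    intro i
    have := b.orthonormal.1 i
    exact this
  have hA := hspread (e 0) (he_unit 0)
  have hB := hspread (e 1) (he_unit 1)
  have ht : 0 ≤ t := le_trans (Finset.sum_nonneg fun j _ => sq_nonneg _) hA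
  set A : Fin n → ℝ := fun j => inner ℝ (v j) (e 0)
  set B : Fin n → ℝ := fun j => inner ℝ (v j) (e 1)
  have key : ∀ j : Fin n, (∃ u ∈ P, ‖u‖ = 1 ∧ α ≤ |(inner ℝ (v j) u : ℝ)|) →
      α ^ 2 ≤ A j ^ 2 + B j ^ 2 := by
    rintro j ⟨u, huP, hu1, hαu⟩
    set u' : P := ⟨u, huP⟩
    set c : EuclideanSpace ℝ (Fin 2) := b.repr u' with hc
    have hcnorm : c 0 ^ 2 + c 1 ^ 2 = 1 := by
      have h1 : ‖c‖ = 1 := by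
        rw [hc, b.repr.norm_map]
        simpa using hu1
      have h2 : ‖c‖ ^ 2 = c 0 ^ 2 + c 1 ^ 2 := by
        rw [EuclideanSpace.norm_eq]
        rw [Real.sq_sqrt (by positivity)]
        simp [Fin.sum_univ_two, sq_abs]
      rw [h1] at h2; linarith
    have hdecomp : (inner ℝ (v j) u : ℝ) = c 0 * A j + c 1 * B j := by
      have hsum : (u : EuclideanSpace ℝ (Fin d)) = c 0 • e 0 + c 1 • e 1 := by
        have := b.sum_repr u'
        have := congrArg (Subtype.val) this
        simpa [Fin.sum_univ_two, e, c] using this.symm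
      rw [hsum, inner_add_right, real_inner_smul_right, real_inner_smul_right]
    have h1 : α ^ 2 ≤ (inner ℝ (v j) u : ℝ) ^ 2 := by
      have := pow_le_pow_left₀ hα.le hαu 2
      simpa [sq_abs] using this
    rw [hdecomp] at h1
    nlinarith [sq_nonneg (c 0 * B j - c 1 * A j), sq_nonneg (A j), sq_nonneg (B j)]
  set S : Finset (Fin n) := Finset.univ.filter (fun j => α ^ 2 ≤ A j ^ 2 + B j ^ 2)
  have hsub : {j : Fin n | ∃ u ∈ P, ‖u‖ = 1 ∧ α ≤ |(inner ℝ (v j) u : ℝ)|} ⊆ ↑S := by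
    intro j hj
    simp only [Finset.coe_filter, Set.mem_setOf_eq, Finset.mem_univ, true_and, S]
    exact key j hj
  have hcard : ({j : Fin n | ∃ u ∈ P, ‖u‖ = 1 ∧ α ≤ |(inner ℝ (v j) u : ℝ)|}.ncard : ℝ)
      ≤ (S.card : ℝ) := by
    have := Set.ncard_le_ncard hsub S.finite_toSet
    rw [Set.ncard_coe_finset] at this
    exact_mod_cast this
  have hcount : (S.card : ℝ) * α ^ 2 ≤ 2 * t := by
    have h1 : (S.card : ℝ) * α ^ 2 ≤ ∑ j ∈ S, (A j ^ 2 + B j ^ 2) := by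
      rw [← nsmul_eq_mul, ← Finset.sum_const]
      refine Finset.sum_le_sum fun j hj => ?_
      exact (Finset.mem_filter.mp hj).2
    have h2 : ∑ j ∈ S, (A j ^ 2 + B j ^ 2) ≤ ∑ j : Fin n, (A j ^ 2 + B j ^ 2) :=
      Finset.sum_le_sum_of_subset_of_nonneg (Finset.subset_univ S)
        (fun j _ _ => by positivity)
    have h3 : ∑ j : Fin n, (A j ^ 2 + B j ^ 2) ≤ 2 * t := by
      rw [Finset.sum_add_distrib]
      have := hA; have := hB
      linarith
    calc (S.card : ℝ) * α ^ 2 ≤ _ := h1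
      _ ≤ _ := h2
      _ ≤ 2 * t := h3
  rcases le_or_gt α 40 with hα40 | hα40
  · have hfinal : ({j : Fin n | ∃ u ∈ P, ‖u‖ = 1 ∧ α ≤ |(inner ℝ (v j) u : ℝ)|}.ncard : ℝ)
        * α ^ 3 ≤ 80 * t := by
      have hc0 : (0 : ℝ) ≤ S.card := Nat.cast_nonneg _
      nlinarith [hcard, hcount, Set.ncard_le_ncard hsub S.finite_toSet,
        mul_le_mul_of_nonneg_right hcard (le_of_lt (pow_pos hα 2))]
    rw [div_mul_eq_mul_div, le_div_iff₀ (pow_pos hα 3)]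
    linarith [hfinal]
  · -- α > 40 > 1, the set is empty
    have hempty : {j : Fin n | ∃ u ∈ P, ‖u‖ = 1 ∧ α ≤ |(inner ℝ (v j) u : ℝ)|} = ∅ := by
      ext j
      simp only [Set.mem_setOf_eq, Set.mem_empty_iff_false, iff_false]
      rintro ⟨u, _, hu1, hαu⟩
      have h1 : |(inner ℝ (v j) u : ℝ)| ≤ 1 := by
        have := abs_real_inner_le_norm (v j) u
        rw [hunit j, hu1] at this; simpa using this
      linarith
    rw [hempty]
    simp only [Set.ncard_empty, Nat.cast_zero]
    positivity
end

section
/- Let u, v_i, v_j, v_k be unit vectors in ℝ^d with u ∈ span{v_i, v_j, v_k}, such that |⟨u, v_i⟩| ≤ 10^{-4}, |⟨u, v_j⟩| ≤ 10^{-4}, |⟨u, v_k⟩| ≤ 10^{-4}, and additionally |⟨v_j, v_k⟩| < 9/10. If |⟨v_i, v_j⟩| < 1/100 and |⟨v_i, v_k⟩| < 1/100, then a contradiction follows; equivalently, under the first set of hypotheses, either |⟨v_i, v_j⟩| ≥ 1/100 or |⟨v_i, v_k⟩| ≥ 1/100. -/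
set_option maxHeartbeats 1000000 in
private lemma stmt6_aux {a b c α β γ : ℝ}
    (h1 : |a + b*α + c*β| ≤ 1/10^4)
    (h2 : |a*α + b + c*γ| ≤ 1/10^4)
    (h3 : |a*β + b*γ + c| ≤ 1/10^4)
    (hA : |α| < 1/100) (hB : |β| < 1/100) (hG : |γ| < 9/10)
    (hone : a*(a + b*α + c*β) + b*(a*α + b + c*γ) + c*(a*β + b*γ + c) = 1) : False := by
  have hba : |b * α| ≤ |b| * (1/100) := by
    rw [abs_mul]; exact mul_le_mul_of_nonneg_left hA.le (abs_nonneg b)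
  have hca : |c * β| ≤ |c| * (1/100) := by
    rw [abs_mul]; exact mul_le_mul_of_nonneg_left hB.le (abs_nonneg c)
  have haa : |a * α| ≤ |a| * (1/100) := by
    rw [abs_mul]; exact mul_le_mul_of_nonneg_left hA.le (abs_nonneg a)
  have hab : |a * β| ≤ |a| * (1/100) := by
    rw [abs_mul]; exact mul_le_mul_of_nonneg_left hB.le (abs_nonneg a)
  have SA : |a| ≤ 1/10^4 + |b|/100 + |c|/100 := by
    have h := abs_le.mp h1
    rcases abs_cases a with ⟨ha, _⟩ | ⟨ha, _⟩ <;>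
      linarith [le_abs_self (b*α), neg_abs_le (b*α), le_abs_self (c*β), neg_abs_le (c*β)]
  have SB : |b + c*γ| ≤ 1/10^4 + |a|/100 := by
    have h := abs_le.mp h2
    rcases abs_cases (b + c*γ) with ⟨ha, _⟩ | ⟨ha, _⟩ <;>
      linarith [le_abs_self (a*α), neg_abs_le (a*α)]
  have SC : |c + b*γ| ≤ 1/10^4 + |a|/100 := by
    have h := abs_le.mp h3
    rcases abs_cases (c + b*γ) with ⟨ha, _⟩ | ⟨ha, _⟩ <;>
      linarith [le_abs_self (a*β), neg_abs_le (a*β)]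
  have hγ2 : γ^2 ≤ (81:ℝ)/100 := by nlinarith [sq_abs γ, abs_nonneg γ]
  have hnn : (0:ℝ) ≤ 1 - γ^2 := by nlinarith
  have hpos : (0:ℝ) < 1 + |γ| := by positivity
  have BB : |b| ≤ 10 * (1/10^4) + |a|/10 := by
    have habs : |b| * (1 - γ^2) ≤ |b + c*γ| + |γ| * |c + b*γ| := by
      have key : b * (1 - γ^2) = (b + c*γ) - γ * (c + b*γ) := by ring
      have : |b * (1 - γ^2)| ≤ |b + c*γ| + |γ| * |c + b*γ| := by
        rw [key]
        calc |(b + c*γ) - γ * (c + b*γ)| ≤ |b + c*γ| + |γ * (c + b*γ)| := abs_sub _ _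
          _ = |b + c*γ| + |γ| * |c + b*γ| := by rw [abs_mul]
      rwa [abs_mul, abs_of_nonneg hnn] at this
    have h2' : |b| * (1 - |γ|) ≤ 1/10^4 + |a|/100 := by
      have hmul : |γ| * |c + b*γ| ≤ |γ| * (1/10^4 + |a|/100) :=
        mul_le_mul_of_nonneg_left SC (abs_nonneg γ)
      have heq : |b| * (1 - γ^2) = |b| * (1 - |γ|) * (1 + |γ|) := by
        rw [← sq_abs γ]; ring
      have h1' : |b| * (1 - |γ|) * (1 + |γ|) ≤ (1/10^4 + |a|/100) * (1 + |γ|) := by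
        rw [← heq]; nlinarith
      exact le_of_mul_le_mul_right h1' hpos
    nlinarith [mul_nonneg (abs_nonneg b) (by linarith : (0:ℝ) ≤ 9/10 - |γ|)]
  have CC : |c| ≤ 10 * (1/10^4) + |a|/10 := by
    have habs : |c| * (1 - γ^2) ≤ |c + b*γ| + |γ| * |b + c*γ| := by
      have key : c * (1 - γ^2) = (c + b*γ) - γ * (b + c*γ) := by ring
      have : |c * (1 - γ^2)| ≤ |c + b*γ| + |γ| * |b + c*γ| := by
        rw [key]
        calc |(c + b*γ) - γ * (b + c*γ)| ≤ |c + b*γ| + |γ * (b + c*γ)| := abs_sub _ _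
          _ = |c + b*γ| + |γ| * |b + c*γ| := by rw [abs_mul]
      rwa [abs_mul, abs_of_nonneg hnn] at this
    have h2' : |c| * (1 - |γ|) ≤ 1/10^4 + |a|/100 := by
      have hmul : |γ| * |b + c*γ| ≤ |γ| * (1/10^4 + |a|/100) :=
        mul_le_mul_of_nonneg_left SB (abs_nonneg γ)
      have heq : |c| * (1 - γ^2) = |c| * (1 - |γ|) * (1 + |γ|) := by
        rw [← sq_abs γ]; ring
      have h1' : |c| * (1 - |γ|) * (1 + |γ|) ≤ (1/10^4 + |a|/100) * (1 + |γ|) := by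
        rw [← heq]; nlinarith
      exact le_of_mul_le_mul_right h1' hpos
    nlinarith [mul_nonneg (abs_nonneg c) (by linarith : (0:ℝ) ≤ 9/10 - |γ|)]
  have final : (1:ℝ) ≤ |a| * (1/10^4) + |b| * (1/10^4) + |c| * (1/10^4) := by
    have e1 : (1:ℝ) = |a*(a + b*α + c*β) + b*(a*α + b + c*γ) + c*(a*β + b*γ + c)| := by
      rw [hone]; simp
    have e2 : |a*(a + b*α + c*β) + b*(a*α + b + c*γ) + c*(a*β + b*γ + c)|
        ≤ |a*(a + b*α + c*β)| + |b*(a*α + b + c*γ)| + |c*(a*β + b*γ + c)| := by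
      calc _ ≤ |a*(a + b*α + c*β) + b*(a*α + b + c*γ)| + |c*(a*β + b*γ + c)| := abs_add_le _ _
        _ ≤ _ := by gcongr; exact abs_add_le _ _
    have e3 : |a*(a + b*α + c*β)| ≤ |a| * (1/10^4) := by
      rw [abs_mul]; exact mul_le_mul_of_nonneg_left h1 (abs_nonneg a)
    have e4 : |b*(a*α + b + c*γ)| ≤ |b| * (1/10^4) := by
      rw [abs_mul]; exact mul_le_mul_of_nonneg_left h2 (abs_nonneg b)
    have e5 : |c*(a*β + b*γ + c)| ≤ |c| * (1/10^4) := by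
      rw [abs_mul]; exact mul_le_mul_of_nonneg_left h3 (abs_nonneg c)
    linarith
  linarith



/-- if u, v_i, v_j, v_k are unit vectors with u in the span of
the triple, u nearly orthogonal (≤ 10⁻⁴) to each of v_i, v_j, v_k, and
|⟨v_j,v_k⟩| < 9/10, then |⟨v_i,v_j⟩| ≥ 1/100 or |⟨v_i,v_k⟩| ≥ 1/100. -/
theorem stmt_6 {d : ℕ} (u vi vj vk : EuclideanSpace ℝ (Fin d))
    (hu : ‖u‖ = 1) (hvi : ‖vi‖ = 1) (hvj : ‖vj‖ = 1) (hvk : ‖vk‖ = 1)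
    (hspan : u ∈ Submodule.span ℝ ({vi, vj, vk} : Set (EuclideanSpace ℝ (Fin d))))
    (hui : |(inner ℝ u vi : ℝ)| ≤ 1 / 10 ^ 4)
    (huj : |(inner ℝ u vj : ℝ)| ≤ 1 / 10 ^ 4)
    (huk : |(inner ℝ u vk : ℝ)| ≤ 1 / 10 ^ 4)
    (hjk : |(inner ℝ vj vk : ℝ)| < 9 / 10) :
    1 / 100 ≤ |(inner ℝ vi vj : ℝ)| ∨ 1 / 100 ≤ |(inner ℝ vi vk : ℝ)| := by
  by_contra hcon
  push_neg at hcon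
  obtain ⟨hij, hik⟩ := hcon
  rw [show ({vi, vj, vk} : Set (EuclideanSpace ℝ (Fin d))) = insert vi {vj, vk} from rfl,
    Submodule.mem_span_insert] at hspan
  obtain ⟨a, z, hz, rfl⟩ := hspan
  rw [Submodule.mem_span_pair] at hz
  obtain ⟨b, c, rfl⟩ := hz
  have nii : (inner ℝ vi vi : ℝ) = 1 := by
    rw [real_inner_self_eq_norm_sq, hvi]; norm_num
  have njj : (inner ℝ vj vj : ℝ) = 1 := by
    rw [real_inner_self_eq_norm_sq, hvj]; norm_num
  have nkk : (inner ℝ vk vk : ℝ) = 1 := by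
    rw [real_inner_self_eq_norm_sq, hvk]; norm_num
  have cji : (inner ℝ vj vi : ℝ) = (inner ℝ vi vj : ℝ) := real_inner_comm vi vj
  have cki : (inner ℝ vk vi : ℝ) = (inner ℝ vi vk : ℝ) := real_inner_comm vi vk
  have ckj : (inner ℝ vk vj : ℝ) = (inner ℝ vj vk : ℝ) := real_inner_comm vj vk
  have e1 : (inner ℝ (a • vi + (b • vj + c • vk)) vi : ℝ)
      = a + b * (inner ℝ vi vj : ℝ) + c * (inner ℝ vi vk : ℝ) := by
    rw [inner_add_left, inner_add_left, real_inner_smul_left, real_inner_smul_left,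
      real_inner_smul_left, nii, cji, cki]; ring
  have e2 : (inner ℝ (a • vi + (b • vj + c • vk)) vj : ℝ)
      = a * (inner ℝ vi vj : ℝ) + b + c * (inner ℝ vj vk : ℝ) := by
    rw [inner_add_left, inner_add_left, real_inner_smul_left, real_inner_smul_left,
      real_inner_smul_left, njj, ckj]; ring
  have e3 : (inner ℝ (a • vi + (b • vj + c • vk)) vk : ℝ)
      = a * (inner ℝ vi vk : ℝ) + b * (inner ℝ vj vk : ℝ) + c := by
    rw [inner_add_left, inner_add_left, real_inner_smul_left, real_inner_smul_left,
      real_inner_smul_left, nkk]; ring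
  rw [e1] at hui
  rw [e2] at huj
  rw [e3] at huk
  have hone : a * (a + b * (inner ℝ vi vj : ℝ) + c * (inner ℝ vi vk : ℝ))
      + b * (a * (inner ℝ vi vj : ℝ) + b + c * (inner ℝ vj vk : ℝ))
      + c * (a * (inner ℝ vi vk : ℝ) + b * (inner ℝ vj vk : ℝ) + c) = 1 := by
    have hXX : (inner ℝ (a • vi + (b • vj + c • vk)) (a • vi + (b • vj + c • vk)) : ℝ) = 1 := by
      rw [real_inner_self_eq_norm_sq, hu]; norm_num
    rw [← e1, ← e2, ← e3, ← hXX]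
    rw [inner_add_right, inner_add_right, real_inner_smul_right, real_inner_smul_right,
      real_inner_smul_right]
    ring
  exact stmt6_aux hui huj huk hij hik hjk hone
end
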